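/- The q-extension G_{p,q}^{(h)} of Diamond's p-adic log gamma function, defined for |x|_p > 1 by the Volkenborn integral G_{p,q}^{(h)}(x) = ∫_{ℤ_p} ((x+z) log_p(x+z) − (x+z)) q^{hz} dμ_0(z), admits the series expansion G_{p,q}^{(h)}(x) = (x B_{0,q}^{(h)} + B_{1,q}^{(h)}) log_p x − x B_{0,q}^{(h)} + Σ_{n=1}^∞ ((−1)^{n+1}/(n(n+1))) B_{n+1,q}^{(h)} x^{−n}. -/

import Mathlib

open Filter IsUltrametricDist

section aux
variable {p : ℕ} [Fact p.Prime] {K : Type*} [NormedField K] [IsUltrametricDist K]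
  [NormedAlgebra ℚ_[p] K] [CompleteSpace K]

private lemma aux_hp1 : (1:ℝ) < (p:ℝ) := by exact_mod_cast (Fact.out : p.Prime).one_lt

private lemma aux_rpos : 0 < (p:ℝ) ^ (-(1:ℝ)/((p:ℝ)-1)) :=
  Real.rpow_pos_of_pos (lt_trans one_pos aux_hp1) _

private lemma aux_rle1 : (p:ℝ) ^ (-(1:ℝ)/((p:ℝ)-1)) ≤ 1 := by
  apply Real.rpow_le_one_of_one_le_of_nonpos aux_hp1.le
  have : (0:ℝ) < (p:ℝ) - 1 := by linarith [aux_hp1 (p := p)]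
  rw [neg_div]
  simp [le_of_lt, div_pos, this]

/-- `‖(n:ℚ_p)‖ = p^(-v_p(n))` for `n ≠ 0`. -/
private lemma aux_norm_natCast (n : ℕ) (hn : n ≠ 0) :
    ‖(n : ℚ_[p])‖ = (p:ℝ) ^ (-(padicValNat p n : ℤ)) := by
  have h1 : ((n : ℚ_[p])) = (((n : ℚ)) : ℚ_[p]) := by push_cast; ring
  rw [h1, Padic.eq_padicNorm,
    padicNorm.eq_zpow_of_nonzero (by exact_mod_cast hn),
    padicValRat.of_nat]
  push_cast
  ring

/-- reciprocal bound: `‖(n:ℚ_p)‖⁻¹ ≤ n`. -/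
private lemma aux_norm_natCast_inv_le (n : ℕ) (hn : n ≠ 0) :
    ‖(n : ℚ_[p])‖⁻¹ ≤ (n : ℝ) := by
  rw [aux_norm_natCast n hn, zpow_neg, inv_inv, zpow_natCast]
  exact_mod_cast Nat.le_of_dvd (Nat.pos_of_ne_zero hn) pow_padicValNat_dvd

/-- factorial bound `‖((n+1)!:ℚ_p)‖⁻¹ ≤ (r⁻¹)^n` where `r = p^(-1/(p-1))`. -/
private lemma aux_factorial_norm_inv_le (n : ℕ) :
    ‖((n+1).factorial : ℚ_[p])‖⁻¹ ≤ (((p:ℝ) ^ (-(1:ℝ)/((p:ℝ)-1)))⁻¹) ^ n := by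
  have hp1 : (1:ℝ) < (p:ℝ) := aux_hp1
  have hpm : (0:ℝ) < (p:ℝ) - 1 := by linarith
  have hv : (padicValNat p ((n+1).factorial)) * ((p:ℝ) - 1) ≤ (n:ℝ) := by
    have hleg : (p - 1) * padicValNat p ((n+1).factorial) = (n+1) - (p.digits (n+1)).sum :=
      sub_one_mul_padicValNat_factorial (n+1)
    have hd1 : 1 ≤ (p.digits (n+1)).sum := by
      have hne : (p.digits (n+1)) ≠ [] := Nat.digits_ne_nil_iff_ne_zero.2 (Nat.succ_ne_zero n)
      have hlast := Nat.getLast_digit_ne_zero p (Nat.succ_ne_zero n)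
      calc 1 ≤ (p.digits (n+1)).getLast hne := Nat.one_le_iff_ne_zero.2 hlast
        _ ≤ (p.digits (n+1)).sum := List.single_le_sum (fun _ _ => Nat.zero_le _) _
            (List.getLast_mem hne)
    have hnat : (p - 1) * padicValNat p ((n+1).factorial) ≤ n := by omega
    have hp2 : 2 ≤ p := (Fact.out : p.Prime).two_le
    calc (padicValNat p ((n+1).factorial)) * ((p:ℝ) - 1)
        = (((p - 1) * padicValNat p ((n+1).factorial) : ℕ) : ℝ) := by
          push_cast [Nat.cast_sub (by omega : 1 ≤ p)]; ring
      _ ≤ (n:ℝ) := by exact_mod_cast hnat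
  have h1 : ‖((n+1).factorial : ℚ_[p])‖⁻¹
      = (p:ℝ) ^ ((padicValNat p ((n+1).factorial) : ℝ)) := by
    rw [aux_norm_natCast _ (Nat.factorial_ne_zero _), zpow_neg, inv_inv, zpow_natCast,
      Real.rpow_natCast]
  have h2 : (((p:ℝ) ^ (-(1:ℝ)/((p:ℝ)-1)))⁻¹) ^ n = (p:ℝ) ^ ((n:ℝ)/((p:ℝ)-1)) := by
    rw [← Real.rpow_neg_one, ← Real.rpow_mul (by positivity), ← Real.rpow_natCast
      ((p:ℝ) ^ (-(1:ℝ)/((p:ℝ)-1) * -1)), ← Real.rpow_mul (by positivity)]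
    congr 1
    field_simp
  rw [h1, h2]
  apply Real.rpow_le_rpow_of_exponent_le hp1.le
  rw [le_div_iff₀ hpm]
  exact hv

/-- `‖u^(n+1) - v^(n+1)‖ ≤ ‖u - v‖ * M^n` in an ultrametric field. -/
private lemma aux_pow_sub_pow (u v : K) (M : ℝ) (hu : ‖u‖ ≤ M) (hv : ‖v‖ ≤ M) (n : ℕ) :
    ‖u ^ (n+1) - v ^ (n+1)‖ ≤ ‖u - v‖ * M ^ n := by
  have hM0 : 0 ≤ M := le_trans (norm_nonneg u) hu
  induction n with
  | zero => simp
  | succ n ih =>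
    have key : u ^ (n+2) - v ^ (n+2) = u * (u ^ (n+1) - v ^ (n+1)) + (u - v) * v ^ (n+1) := by
      ring
    rw [key]
    refine le_trans (norm_add_le_max _ _) (max_le ?_ ?_)
    · rw [norm_mul]
      calc ‖u‖ * ‖u^(n+1) - v^(n+1)‖ ≤ M * (‖u - v‖ * M ^ n) :=
            mul_le_mul hu ih (norm_nonneg _) hM0
        _ = ‖u - v‖ * M ^ (n+1) := by ring
    · rw [norm_mul, norm_pow]
      calc ‖u - v‖ * ‖v‖ ^ (n+1) ≤ ‖u - v‖ * M ^ (n+1) := by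
            apply mul_le_mul_of_nonneg_left (pow_le_pow_left₀ (norm_nonneg v) hv _) (norm_nonneg _)
        _ = ‖u - v‖ * M ^ (n+1) := rfl

/-- summability of the exponential series. -/
private lemma aux_exp_summable (u : K) (hu : ‖u‖ < (p:ℝ) ^ (-(1:ℝ)/((p:ℝ)-1))) :
    Summable (fun n : ℕ => ((n.factorial : ℚ_[p]))⁻¹ • u ^ n) := by
  set r : ℝ := (p:ℝ) ^ (-(1:ℝ)/((p:ℝ)-1)) with hr
  have hr0 : 0 < r := aux_rpos
  rw [← summable_nat_add_iff 1]
  apply Summable.of_norm_bounded (g := fun n : ℕ => ‖u‖ * (‖u‖ / r) ^ n)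
  · exact ((summable_geometric_of_lt_one (by positivity) (by
      rw [div_lt_one hr0]; exact hu)).mul_left ‖u‖)
  · intro n
    rw [norm_smul, norm_inv, norm_pow]
    calc ‖((n+1).factorial : ℚ_[p])‖⁻¹ * ‖u‖ ^ (n+1)
        ≤ (r⁻¹) ^ n * ‖u‖ ^ (n+1) := by
          apply mul_le_mul_of_nonneg_right (aux_factorial_norm_inv_le n) (by positivity)
      _ = ‖u‖ * (‖u‖ / r) ^ n := by rw [div_eq_mul_inv, mul_pow]; ring

private lemma aux_exp_term_le (u : K) (hu : ‖u‖ < (p:ℝ) ^ (-(1:ℝ)/((p:ℝ)-1))) (n : ℕ) :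
    ‖(((n+1).factorial : ℚ_[p]))⁻¹ • u ^ (n+1)‖ ≤ ‖u‖ := by
  set r : ℝ := (p:ℝ) ^ (-(1:ℝ)/((p:ℝ)-1)) with hr
  have hr0 : 0 < r := aux_rpos
  rw [norm_smul, norm_inv, norm_pow]
  calc ‖((n+1).factorial : ℚ_[p])‖⁻¹ * ‖u‖ ^ (n+1)
      ≤ (r⁻¹) ^ n * ‖u‖ ^ (n+1) :=
        mul_le_mul_of_nonneg_right (aux_factorial_norm_inv_le n) (by positivity)
    _ = ‖u‖ * (‖u‖ / r) ^ n := by rw [div_eq_mul_inv, mul_pow]; ring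
    _ ≤ ‖u‖ * 1 := by
        apply mul_le_mul_of_nonneg_left _ (norm_nonneg u)
        apply pow_le_one₀ (by positivity)
        rw [div_le_one hr0]; exact hu.le
    _ = ‖u‖ := mul_one _

private lemma aux_exp_sub_one (u : K) (hu : ‖u‖ < (p:ℝ) ^ (-(1:ℝ)/((p:ℝ)-1))) :
    ‖NormedSpace.exp u - 1‖ ≤ ‖u‖ := by
  have hsum := aux_exp_summable u hu
  simp only [NormedSpace.exp_eq_tsum ℚ_[p]]
  rw [Summable.tsum_eq_zero_add hsum]
  simp only [Nat.factorial_zero, Nat.cast_one, inv_one, pow_zero, one_smul]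
  rw [add_sub_cancel_left]
  exact norm_tsum_le_of_forall_le_of_nonneg (norm_nonneg u) (fun n => aux_exp_term_le u hu n)

private lemma aux_exp_norm_le_one (u : K) (hu : ‖u‖ < (p:ℝ) ^ (-(1:ℝ)/((p:ℝ)-1))) :
    ‖NormedSpace.exp u‖ ≤ 1 := by
  have h1 := aux_exp_sub_one u hu
  calc ‖NormedSpace.exp u‖ = ‖(NormedSpace.exp u - 1) + 1‖ := by ring_nf
    _ ≤ max ‖NormedSpace.exp u - 1‖ ‖(1:K)‖ := norm_add_le_max _ _
    _ ≤ 1 := by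
        apply max_le _ (by simp)
        exact le_trans h1 (le_trans hu.le aux_rle1)

private lemma aux_exp_lipschitz (u v : K) (hu : ‖u‖ < (p:ℝ) ^ (-(1:ℝ)/((p:ℝ)-1)))
    (hv : ‖v‖ < (p:ℝ) ^ (-(1:ℝ)/((p:ℝ)-1))) :
    ‖NormedSpace.exp u - NormedSpace.exp v‖ ≤ ‖u - v‖ := by
  set r : ℝ := (p:ℝ) ^ (-(1:ℝ)/((p:ℝ)-1)) with hr
  have hr0 : 0 < r := aux_rpos
  simp only [NormedSpace.exp_eq_tsum ℚ_[p]]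
  rw [← Summable.tsum_sub (aux_exp_summable u hu) (aux_exp_summable v hv)]
  apply norm_tsum_le_of_forall_le_of_nonneg (norm_nonneg (u - v))
  intro n
  match n with
  | 0 => simp
  | (n+1) =>
    rw [← smul_sub, norm_smul, norm_inv]
    have hM : max ‖u‖ ‖v‖ < r := max_lt hu hv
    have hM0 : 0 ≤ max ‖u‖ ‖v‖ := le_trans (norm_nonneg u) (le_max_left _ _)
    calc ‖((n+1).factorial : ℚ_[p])‖⁻¹ * ‖u ^ (n+1) - v ^ (n+1)‖
        ≤ (r⁻¹) ^ n * (‖u - v‖ * (max ‖u‖ ‖v‖) ^ n) := by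
          apply mul_le_mul (aux_factorial_norm_inv_le n)
            (aux_pow_sub_pow u v _ (le_max_left _ _) (le_max_right _ _) n)
            (norm_nonneg _) (by positivity)
      _ = ‖u - v‖ * ((max ‖u‖ ‖v‖) / r) ^ n := by rw [div_eq_mul_inv, mul_pow]; ring
      _ ≤ ‖u - v‖ * 1 := by
          apply mul_le_mul_of_nonneg_left _ (norm_nonneg _)
          apply pow_le_one₀ (by positivity)
          rw [div_le_one hr0]; exact hM.le
      _ = ‖u - v‖ := mul_one _

/-- decomposition of a sum over `range (k*m)`. -/
private lemma aux_sum_range_mul {β : Type*} [AddCommMonoid β] (f : ℕ → β) (k m : ℕ) :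
    ∑ z ∈ Finset.range (k * m), f z
      = ∑ j ∈ Finset.range k, ∑ z ∈ Finset.range m, f (j * m + z) := by
  induction k with
  | zero => simp
  | succ k ih =>
    rw [Finset.sum_range_succ, ← ih, add_mul, one_mul, Finset.sum_range_add]

/-- The key Volkenborn-sum bound: Riemann sums of a Lipschitz function vanishing at `0`
are uniformly bounded by `p * C`. -/
private lemma aux_volkenborn_bound (hpK : ‖(p:K)‖ = (p:ℝ)⁻¹) (f : ℕ → K) (C : ℝ) (hC : 0 ≤ C)
    (hf0 : f 0 = 0)
    (hlip : ∀ a b : ℕ, ‖f a - f b‖ ≤ C * ‖((a : ℤ_[p]) - (b : ℤ_[p]))‖) (N : ℕ) :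
    ‖((p:K)^N)⁻¹ * ∑ z ∈ Finset.range (p^N), f z‖ ≤ (p:ℝ) * C := by
  have hp0 : (0:ℝ) < p := lt_trans one_pos aux_hp1
  have hpK0 : (p:K) ≠ 0 := by
    intro hcon
    rw [hcon, norm_zero] at hpK
    exact absurd hpK.symm (by positivity)
  induction N with
  | zero => simp [hf0]; positivity
  | succ N ih =>
    have key : ‖((p:K)^(N+1))⁻¹ * ∑ z ∈ Finset.range (p^(N+1)), f z
        - ((p:K)^N)⁻¹ * ∑ z ∈ Finset.range (p^N), f z‖ ≤ (p:ℝ) * C := by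
      have hsplit : ∑ z ∈ Finset.range (p^(N+1)), f z
          = ∑ j ∈ Finset.range p, ∑ z ∈ Finset.range (p^N), f (j * p^N + z) := by
        rw [pow_succ', aux_sum_range_mul]
      have hconst : (p:K) * ∑ z ∈ Finset.range (p^N), f z
          = ∑ j ∈ Finset.range p, ∑ z ∈ Finset.range (p^N), f z := by
        rw [Finset.sum_const, Finset.card_range, nsmul_eq_mul]
      have heq : ((p:K)^(N+1))⁻¹ * ∑ z ∈ Finset.range (p^(N+1)), f z
          - ((p:K)^N)⁻¹ * ∑ z ∈ Finset.range (p^N), f z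
          = ((p:K)^(N+1))⁻¹ * (∑ j ∈ Finset.range p, ∑ z ∈ Finset.range (p^N),
              (f (j * p^N + z) - f z)) := by
        rw [hsplit]
        have hd : ∑ j ∈ Finset.range p, ∑ z ∈ Finset.range (p^N), (f (j * p^N + z) - f z)
            = (∑ j ∈ Finset.range p, ∑ z ∈ Finset.range (p^N), f (j * p^N + z))
              - (p:K) * ∑ z ∈ Finset.range (p^N), f z := by
          rw [hconst, ← Finset.sum_sub_distrib]
          exact Finset.sum_congr rfl fun j _ => by rw [← Finset.sum_sub_distrib]
        rw [hd, mul_sub]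
        congr 1
        rw [pow_succ]
        field_simp
      have hterm : ∀ j z : ℕ, ‖f (j * p^N + z) - f z‖ ≤ C * ((p:ℝ)⁻¹)^N := by
        intro j z
        refine le_trans (hlip _ _) ?_
        apply mul_le_mul_of_nonneg_left _ hC
        have hcast : ((j * p^N + z : ℕ) : ℤ_[p]) - ((z:ℕ) : ℤ_[p])
            = (j:ℤ_[p]) * (p:ℤ_[p])^N := by push_cast; ring
        rw [hcast, norm_mul, norm_pow, PadicInt.norm_p]
        calc ‖(j:ℤ_[p])‖ * ((p:ℝ)⁻¹)^N ≤ 1 * ((p:ℝ)⁻¹)^N :=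
              mul_le_mul_of_nonneg_right (PadicInt.norm_le_one _) (by positivity)
          _ = ((p:ℝ)⁻¹)^N := one_mul _
      have hin : ‖∑ j ∈ Finset.range p, ∑ z ∈ Finset.range (p^N),
          (f (j * p^N + z) - f z)‖ ≤ C * ((p:ℝ)⁻¹)^N :=
        norm_sum_le_of_forall_le_of_nonneg (by positivity) (fun j _ =>
          norm_sum_le_of_forall_le_of_nonneg (by positivity) (fun z _ => hterm j z))
      have hpinv : ‖((p:K)^(N+1))⁻¹‖ = (p:ℝ)^(N+1) := by
        rw [norm_inv, norm_pow, hpK, inv_pow, inv_inv]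
      rw [heq, norm_mul, hpinv]
      calc (p:ℝ)^(N+1) * ‖∑ j ∈ Finset.range p, ∑ z ∈ Finset.range (p^N),
            (f (j * p^N + z) - f z)‖
          ≤ (p:ℝ)^(N+1) * (C * ((p:ℝ)⁻¹)^N) :=
            mul_le_mul_of_nonneg_left hin (by positivity)
        _ = (p:ℝ) * C := by
            rw [inv_pow, pow_succ]
            field_simp
    calc ‖((p:K)^(N+1))⁻¹ * ∑ z ∈ Finset.range (p^(N+1)), f z‖
        = ‖(((p:K)^(N+1))⁻¹ * ∑ z ∈ Finset.range (p^(N+1)), f z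
            - ((p:K)^N)⁻¹ * ∑ z ∈ Finset.range (p^N), f z)
            + ((p:K)^N)⁻¹ * ∑ z ∈ Finset.range (p^N), f z‖ := by ring_nf
      _ ≤ max _ _ := norm_add_le_max _ _
      _ ≤ (p:ℝ) * C := max_le key ih

private lemma aux_padicInt_norm_natCast (n : ℕ) : ‖(n : ℤ_[p])‖ = ‖(n : ℚ_[p])‖ := by
  have := PadicInt.norm_intCast_eq_padic_norm (p := p) (n : ℤ)
  push_cast at this ⊢
  exact this

end aux



open Filter in
/-- the `q`-extension of Diamond's `p`-adic log gamma function,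
`G_{p,q}^{(h)}(x) = ∫_{ℤ_p} ((x+z)log_p(x+z) − (x+z)) q^{hz} dμ₀(z)` for `|x|_p > 1`,
admits the expansion
`G_{p,q}^{(h)}(x) = (x B₀ + B₁) log_p x − x B₀ + Σ_{n≥1} ((−1)^{n+1}/(n(n+1))) B_{n+1} x^{−n}`
(the series being indexed below by `n = m+1`). Here `K` is a complete nonarchimedean
normed field over `ℚ_p` standing in for `ℂ_p` (with isometric embedding `ι : ℤ_p →+* K`),
`L = log_p` is the Iwasawa logarithm, `q^{hz} = exp(z·h·log_p q)`, the Volkenborn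
integrals are limits of Riemann sums, and `B n = B_{n,q}^{(h)} = ∫_{ℤ_p} q^{hz} zⁿ dμ₀(z)`. -/
theorem q_diamond_log_gamma_expansion
    (p : ℕ) [Fact p.Prime]
    (K : Type*) [NormedField K] [IsUltrametricDist K] [CharZero K]
    [NormedAlgebra ℚ_[p] K] [CompleteSpace K]
    (ι : ℤ_[p] →+* K) (hι : ∀ z : ℤ_[p], ‖ι z‖ = ‖z‖)
    (L : K → K)
    (hL_series : ∀ y : K, ‖y‖ < 1 →
      HasSum (fun n : ℕ => (-1) ^ n * y ^ (n + 1) / ((n : K) + 1)) (L (1 + y)))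
    (hL_mul : ∀ y z : K, y ≠ 0 → z ≠ 0 → L (y * z) = L y + L z)
    (hL_p : L (p : K) = 0)
    (h : ℤ) (q : K) (hq : ‖1 - q‖ < (p : ℝ) ^ (-(1 : ℝ) / ((p : ℝ) - 1)))
    (ℓ : K) (hℓ : ‖ℓ‖ < (p : ℝ) ^ (-(1 : ℝ) / ((p : ℝ) - 1)))
    (hexpℓ : NormedSpace.exp ℓ = q)
    (B : ℕ → K)
    (hB : ∀ n : ℕ, Tendsto
      (fun N : ℕ => (((p : K) ^ N)⁻¹) *
        ∑ z ∈ Finset.range (p ^ N),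
          NormedSpace.exp (ι (z : ℤ_[p]) * ((h : K) * ℓ)) * (ι (z : ℤ_[p])) ^ n)
      atTop (nhds (B n)))
    (x : K) (hx : 1 < ‖x‖)
    (G : K)
    (hG : Tendsto
      (fun N : ℕ => (((p : K) ^ N)⁻¹) *
        ∑ z ∈ Finset.range (p ^ N),
          ((x + ι (z : ℤ_[p])) * L (x + ι (z : ℤ_[p])) - (x + ι (z : ℤ_[p]))) *
            NormedSpace.exp (ι (z : ℤ_[p]) * ((h : K) * ℓ)))
      atTop (nhds G)) :
    ∃ S : K,
      HasSum (fun m : ℕ =>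
        (-1 : K) ^ (m + 2) / (((m : K) + 1) * ((m : K) + 2)) * B (m + 2) *
          x ^ (-((m : ℤ) + 1))) S ∧
      G = (x * B 0 + B 1) * L x - x * B 0 + S := by
  clear hL_p hq hexpℓ q
  -- basic constants
  have hp1 : (1:ℝ) < (p:ℝ) := aux_hp1
  have hp0 : (0:ℝ) < (p:ℝ) := lt_trans one_pos hp1
  have hrr0 : (0:ℝ) < (p : ℝ) ^ (-(1 : ℝ) / ((p : ℝ) - 1)) := aux_rpos
  have hxnorm0 : (0:ℝ) < ‖x‖ := lt_trans one_pos hx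
  have hxne : x ≠ 0 := by
    intro h0; rw [h0, norm_zero] at hxnorm0; exact lt_irrefl 0 hxnorm0
  have hι1 : ∀ t : ℤ_[p], ‖ι t‖ ≤ 1 := fun t => by rw [hι]; exact PadicInt.norm_le_one t
  have hnormsub : ∀ a b : K, ‖a - b‖ ≤ max ‖a‖ ‖b‖ := fun a b => by
    rw [sub_eq_add_neg]
    refine le_trans (IsUltrametricDist.norm_add_le_max a (-b)) ?_
    rw [norm_neg]
  have hHl : ‖(h:K) * ℓ‖ < (p : ℝ) ^ (-(1 : ℝ) / ((p : ℝ) - 1)) := by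
    refine lt_of_le_of_lt ?_ hℓ
    rw [norm_mul]
    exact mul_le_of_le_one_left (norm_nonneg ℓ) (IsUltrametricDist.norm_intCast_le_one K h)
  have hargz : ∀ t : ℤ_[p], ‖ι t * ((h:K) * ℓ)‖ < (p : ℝ) ^ (-(1 : ℝ) / ((p : ℝ) - 1)) := by
    intro t
    refine lt_of_le_of_lt ?_ hHl
    rw [norm_mul]
    exact mul_le_of_le_one_left (norm_nonneg _) (hι1 t)
  have hpKnorm : ‖(p:K)‖ = (p:ℝ)⁻¹ := by
    rw [show ((p:ℕ):K) = ι ((p:ℕ):ℤ_[p]) by rw [map_natCast], hι, PadicInt.norm_p]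
  -- the building blocks
  set F : ℕ → K := fun z : ℕ => NormedSpace.exp (ι (z : ℤ_[p]) * ((h : K) * ℓ)) with hF
  set c : ℕ → K :=
    fun m => (-1 : K) ^ (m + 2) / (((m : K) + 1) * ((m : K) + 2)) * x ^ (-((m : ℤ) + 1)) with hc
  set ffm : ℕ → ℕ → K := fun m z => c m * (ι (z : ℤ_[p])) ^ (m + 2) * F z with hffm
  set gg : ℕ → K := fun z : ℕ =>
    ((x + ι (z : ℤ_[p])) * L (x + ι (z : ℤ_[p])) - (x + ι (z : ℤ_[p]))) * F z with hgg
  set aa : ℕ → K := fun z : ℕ => ((x + ι (z : ℤ_[p])) * L x - x) * F z with haa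
  have hG' : Tendsto (fun N : ℕ => (((p : K) ^ N)⁻¹) * ∑ z ∈ Finset.range (p ^ N), gg z)
      atTop (nhds G) := by simp only [hgg, hF]; exact hG
  have hB' : ∀ n : ℕ, Tendsto (fun N : ℕ => (((p : K) ^ N)⁻¹) *
      ∑ z ∈ Finset.range (p ^ N), F z * (ι (z : ℤ_[p])) ^ n) atTop (nhds (B n)) := by
    intro n; simp only [hF]; exact hB n
  -- properties of F
  have hF1 : ∀ z : ℕ, ‖F z‖ ≤ 1 := fun z => by
    rw [hF]; exact aux_exp_norm_le_one _ (hargz _)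
  have hFlip : ∀ a b : ℕ, ‖F a - F b‖ ≤ ‖((a : ℤ_[p]) - (b : ℤ_[p]))‖ := by
    intro a b
    rw [hF]
    refine le_trans (aux_exp_lipschitz _ _ (hargz _) (hargz _)) ?_
    rw [show ι (a : ℤ_[p]) * ((h:K)*ℓ) - ι (b : ℤ_[p]) * ((h:K)*ℓ)
        = ι ((a : ℤ_[p]) - (b : ℤ_[p])) * ((h:K)*ℓ) by rw [map_sub]; ring, norm_mul, hι]
    exact mul_le_of_le_one_right (norm_nonneg _) (le_trans hHl.le aux_rle1)
  -- norm bound on the coefficients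
  have htx0 : (0:ℝ) ≤ ‖x‖⁻¹ := by positivity
  have htx1 : ‖x‖⁻¹ < 1 := inv_lt_one_of_one_lt₀ hx
  have hKnat : ∀ n : ℕ, ‖(((n+1 : ℕ)) : K)‖⁻¹ ≤ ((n:ℝ)+1) := by
    intro n
    rw [show (((n+1:ℕ)) : K) = ι (((n+1:ℕ)) : ℤ_[p]) by rw [map_natCast], hι,
      aux_padicInt_norm_natCast]
    have := aux_norm_natCast_inv_le (p := p) (n+1) (Nat.succ_ne_zero n)
    push_cast at this ⊢
    exact this
  have hcnorm : ∀ m : ℕ, ‖c m‖ ≤ ((m:ℝ)+1) * ((m:ℝ)+2) * (‖x‖⁻¹) ^ (m+1) := by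
    intro m
    have e1 : ((m:K)+1) = (((m+1:ℕ)) : K) := by push_cast; ring
    have e2 : ((m:K)+2) = (((m+2:ℕ)) : K) := by push_cast; ring
    have e3 : ‖x ^ (-((m:ℤ)+1))‖ = (‖x‖⁻¹) ^ (m+1) := by
      rw [norm_zpow, show (-((m:ℤ)+1)) = -(((m+1:ℕ):ℤ)) by push_cast; ring, zpow_neg,
        zpow_natCast, inv_pow]
    rw [hc]
    simp only []
    rw [norm_mul, norm_div, e3, e1, e2, norm_mul]
    have h1 : ‖(-1:K) ^ (m+2)‖ = 1 := by rw [norm_pow, norm_neg, norm_one, one_pow]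
    rw [h1]
    rw [one_div]
    rw [mul_inv]
    have hb1 : ‖(((m+1:ℕ)) : K)‖⁻¹ ≤ ((m:ℝ)+1) := hKnat m
    have hb2 : ‖(((m+2:ℕ)) : K)‖⁻¹ ≤ ((m:ℝ)+2) := by
      have h' := hKnat (m+1)
      rw [show ((m+1+1 : ℕ)) = ((m+2 : ℕ)) by omega] at h'
      push_cast at h' ⊢
      linarith
    calc ‖(((m+1:ℕ)):K)‖⁻¹ * ‖(((m+2:ℕ)):K)‖⁻¹ * (‖x‖⁻¹)^(m+1)
        ≤ (((m:ℝ)+1) * ((m:ℝ)+2)) * (‖x‖⁻¹)^(m+1) := by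
          apply mul_le_mul_of_nonneg_right _ (by positivity)
          exact mul_le_mul hb1 hb2 (by positivity) (by positivity)
      _ = ((m:ℝ)+1) * ((m:ℝ)+2) * (‖x‖⁻¹)^(m+1) := rfl
  -- Lipschitz bound and Volkenborn bound for each term
  have hffm0 : ∀ m : ℕ, ffm m 0 = 0 := by
    intro m
    simp only [hffm, Nat.cast_zero, map_zero]
    rw [zero_pow (by omega), mul_zero, zero_mul]
  have hffmlip : ∀ m a b : ℕ, ‖ffm m a - ffm m b‖ ≤ ‖c m‖ * ‖((a : ℤ_[p]) - (b : ℤ_[p]))‖ := by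
    intro m a b
    have hkey : ffm m a - ffm m b
        = c m * ((ι (a : ℤ_[p]))^(m+2) * (F a - F b)
            + ((ι (a : ℤ_[p]))^(m+2) - (ι (b : ℤ_[p]))^(m+2)) * F b) := by
      simp only [hffm]; ring
    rw [hkey, norm_mul]
    apply mul_le_mul_of_nonneg_left _ (norm_nonneg _)
    refine le_trans (IsUltrametricDist.norm_add_le_max _ _) (max_le ?_ ?_)
    · rw [norm_mul, norm_pow]
      calc ‖ι (a : ℤ_[p])‖^(m+2) * ‖F a - F b‖
          ≤ 1 * ‖((a : ℤ_[p]) - (b : ℤ_[p]))‖ :=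
            mul_le_mul (pow_le_one₀ (norm_nonneg _) (hι1 _)) (hFlip a b)
              (norm_nonneg _) one_pos.le
        _ = ‖((a : ℤ_[p]) - (b : ℤ_[p]))‖ := one_mul _
    · rw [norm_mul]
      have hps := aux_pow_sub_pow (ι (a : ℤ_[p])) (ι (b : ℤ_[p])) 1 (hι1 _) (hι1 _) (m+1)
      rw [one_pow, mul_one] at hps
      calc ‖(ι (a : ℤ_[p]))^(m+2) - (ι (b : ℤ_[p]))^(m+2)‖ * ‖F b‖
          ≤ ‖ι (a : ℤ_[p]) - ι (b : ℤ_[p])‖ * 1 :=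
            mul_le_mul hps (hF1 b) (norm_nonneg _) (norm_nonneg _)
        _ = ‖((a : ℤ_[p]) - (b : ℤ_[p]))‖ := by rw [mul_one, ← map_sub, hι]
  have hbound : ∀ m N : ℕ,
      ‖((p:K)^N)⁻¹ * ∑ z ∈ Finset.range (p^N), ffm m z‖ ≤ (p:ℝ) * ‖c m‖ :=
    fun m N => aux_volkenborn_bound hpKnorm (ffm m) ‖c m‖ (norm_nonneg _)
      (hffm0 m) (hffmlip m) N
  -- summable majorant
  set bb : ℕ → ℝ := fun m => (p:ℝ) * (((m:ℝ)+1) * ((m:ℝ)+2) * (‖x‖⁻¹) ^ (m+1)) with hbb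
  have hbb0 : ∀ m, 0 ≤ bb m := by
    intro m; rw [hbb]
    have h1 : (0:ℝ) ≤ (‖x‖⁻¹)^(m+1) := pow_nonneg htx0 _
    positivity
  have hbbsum : Summable bb := by
    have hnx : ‖(‖x‖⁻¹ : ℝ)‖ < 1 := by rwa [Real.norm_of_nonneg htx0]
    have s0 : Summable (fun m : ℕ => (‖x‖⁻¹)^m) := summable_geometric_of_lt_one htx0 htx1
    have s1 : Summable (fun m : ℕ => (m:ℝ) * (‖x‖⁻¹)^m) := by
      have := summable_pow_mul_geometric_of_norm_lt_one 1 hnx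
      simpa using this
    have s2 : Summable (fun m : ℕ => (m:ℝ)^2 * (‖x‖⁻¹)^m) :=
      summable_pow_mul_geometric_of_norm_lt_one 2 hnx
    have hcomb : Summable (fun m : ℕ => (p:ℝ) * (((m:ℝ)^2 * (‖x‖⁻¹)^m) * ‖x‖⁻¹
        + (3 * ((m:ℝ) * (‖x‖⁻¹)^m)) * ‖x‖⁻¹ + (2 * (‖x‖⁻¹)^m) * ‖x‖⁻¹)) :=
      (((s2.mul_right _).add (((s1.mul_left 3).mul_right _))).add
        ((s0.mul_left 2).mul_right _)).mul_left _
    refine hcomb.congr ?_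
    intro m
    rw [hbb]
    ring
  have hbound' : ∀ m N : ℕ,
      ‖((p:K)^N)⁻¹ * ∑ z ∈ Finset.range (p^N), ffm m z‖ ≤ bb m := by
    intro m N
    refine le_trans (hbound m N) ?_
    rw [hbb]
    exact mul_le_mul_of_nonneg_left (hcnorm m) hp0.le
  -- convergence of each term's Riemann sums
  have hfmlim : ∀ m : ℕ, Tendsto (fun N => ((p:K)^N)⁻¹ * ∑ z ∈ Finset.range (p^N), ffm m z)
      atTop (nhds (c m * B (m+2))) := by
    intro m
    have h1 := (hB' (m+2)).const_mul (c m)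
    have heq : (fun N => c m * (((p:K)^N)⁻¹ *
        ∑ z ∈ Finset.range (p^N), F z * (ι (z : ℤ_[p]))^(m+2)))
        = fun N => ((p:K)^N)⁻¹ * ∑ z ∈ Finset.range (p^N), ffm m z := by
      funext N
      rw [show ∑ z ∈ Finset.range (p^N), ffm m z
          = c m * ∑ z ∈ Finset.range (p^N), F z * (ι (z : ℤ_[p]))^(m+2) from by
        rw [Finset.mul_sum]
        exact Finset.sum_congr rfl fun z _ => by simp only [hffm]; ring]
      ring
    rw [← heq]
    exact h1
  set ss : ℕ → K := fun m => c m * B (m+2) with hss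
  have hsnorm : ∀ m, ‖ss m‖ ≤ bb m := fun m =>
    le_of_tendsto (hfmlim m).norm (Eventually.of_forall (fun N => hbound' m N))
  have hssum : Summable ss := Summable.of_norm_bounded hbbsum hsnorm
  obtain ⟨S, hS⟩ := hssum
  -- pointwise expansion
  have hpt : ∀ z : ℕ, HasSum (fun m => ffm m z) (gg z - aa z) := by
    intro z
    obtain ⟨w, hw⟩ : ∃ w : K, w = ι (z : ℤ_[p]) := ⟨_, rfl⟩
    have hwn : ‖w‖ ≤ 1 := by rw [hw]; exact hι1 _
    obtain ⟨y, hyy⟩ : ∃ y : K, y = w / x := ⟨_, rfl⟩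
    have hyn : ‖y‖ < 1 := by
      rw [hyy, norm_div, div_lt_one hxnorm0]
      exact lt_of_le_of_lt hwn hx
    have h1 := hL_series y hyn
    have hy1 : (1:K) + y ≠ 0 := by
      intro h0
      have hwx : y = -1 := by linear_combination h0
      rw [hwx, norm_neg, norm_one] at hyn
      exact lt_irrefl 1 hyn
    have hxy : x * (1 + y) = x + w := by rw [hyy]; field_simp
    have hLsplit : L (x + w) = L x + L (1 + y) := by
      rw [← hxy]; exact hL_mul x (1 + y) hxne hy1
    have h2 := h1.mul_left (y)
    have h3 : HasSum (fun n : ℕ =>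
        (fun m : ℕ => (-1:K)^m * (y)^(m+1)/((m:K)+1)) (n+1)) (L (1 + y) - y) := by
      refine (hasSum_nat_add_iff (f := fun m : ℕ => (-1:K)^m * (y)^(m+1)/((m:K)+1)) 1).2 ?_
      have he : ∑ i ∈ Finset.range 1, (fun m : ℕ => (-1:K)^m * (y)^(m+1)/((m:K)+1)) i
          = y := by simp
      rw [he, sub_add_cancel]
      exact h1
    have h4 := h2.add h3
    have hfe : (fun n : ℕ => y * ((-1:K)^n * (y)^(n+1)/((n:K)+1))
        + (fun m : ℕ => (-1:K)^m * (y)^(m+1)/((m:K)+1)) (n+1))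
        = fun n : ℕ => (-1:K)^n * (y)^(n+2)/(((n:K)+1)*((n:K)+2)) := by
      funext n
      show y * ((-1:K)^n * (y)^(n+1)/((n:K)+1))
          + (-1:K)^(n+1) * (y)^(n+1+1)/(((n+1:ℕ):K)+1)
          = (-1:K)^n * (y)^(n+2)/(((n:K)+1)*((n:K)+2))
      have hn1 : ((n:K)+1) ≠ 0 := Nat.cast_add_one_ne_zero n
      have hn2 : ((n:K)+2) ≠ 0 := by
        intro h0; apply Nat.cast_add_one_ne_zero (n+1) (R := K); push_cast; linear_combination h0
      rw [show (((n+1:ℕ):K)+1) = ((n:K)+2) by push_cast; ring]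
      rw [← mul_div_assoc, div_add_div _ _ hn1 hn2,
        div_eq_div_iff (mul_ne_zero hn1 hn2) (mul_ne_zero hn1 hn2)]
      ring
    rw [hfe] at h4
    have h6 := h4.mul_left (x * F z)
    have h7 : (fun n : ℕ => x * F z * ((-1:K)^n * (y)^(n+2)/(((n:K)+1)*((n:K)+2))))
        = fun n : ℕ => ffm n z := by
      funext n
      simp only [hffm, hc]
      rw [← hw]
      have hzp : x ^ (-((n:ℤ)+1)) = (x^(n+1))⁻¹ := by
        rw [show (-((n:ℤ)+1)) = -(((n+1:ℕ):ℤ)) by push_cast; ring, zpow_neg, zpow_natCast]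
      rw [hzp]
      have hn1 : ((n:K)+1) ≠ 0 := Nat.cast_add_one_ne_zero n
      have hn2 : ((n:K)+2) ≠ 0 := by
        intro h0; apply Nat.cast_add_one_ne_zero (n+1) (R := K); push_cast; linear_combination h0
      have hn1' : (1+(n:K)) ≠ 0 := by rw [add_comm]; exact hn1
      have hn2' : (2+(n:K)) ≠ 0 := by rw [add_comm]; exact hn2
      have hxp : (x:K)^(n+1) ≠ 0 := pow_ne_zero _ hxne
      rw [hyy]
      field_simp [hn1, hn2, hn1', hn2']
      have hx2 : x^2 * x⁻¹^2 = 1 := by rw [← mul_pow, mul_inv_cancel₀ hxne, one_pow]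
      have hxn : x^n * x⁻¹^n = 1 := by rw [← mul_pow, mul_inv_cancel₀ hxne, one_pow]
      linear_combination (F z * w ^ 2 * w ^ n * (-1) ^ n * x^n * x⁻¹^n) * hx2 + (F z * w ^ 2 * w ^ n * (-1) ^ n) * hxn
    have h8 : x * F z * (y * L (1 + y) + (L (1 + y) - y)) = gg z - aa z := by
      simp only [hgg, haa]
      rw [← hw, hLsplit, hyy]
      field_simp
      ring
    rw [h7, h8] at h6
    exact h6
  -- Riemann sums of the series, per level N
  have hNsum : ∀ N : ℕ, HasSum (fun m => ((p:K)^N)⁻¹ * ∑ z ∈ Finset.range (p^N), ffm m z)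
      (((p:K)^N)⁻¹ * ∑ z ∈ Finset.range (p^N), gg z
        - ((p:K)^N)⁻¹ * ∑ z ∈ Finset.range (p^N), aa z) := by
    intro N
    have h1 : HasSum (fun m => ∑ z ∈ Finset.range (p^N), ffm m z)
        (∑ z ∈ Finset.range (p^N), (gg z - aa z)) := hasSum_sum (fun z _ => hpt z)
    have h2 := h1.mul_left ((p:K)^N)⁻¹
    rwa [Finset.sum_sub_distrib, mul_sub] at h2
  -- the swap of limits
  have key : Tendsto (fun N => ((p:K)^N)⁻¹ * ∑ z ∈ Finset.range (p^N), gg z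
      - ((p:K)^N)⁻¹ * ∑ z ∈ Finset.range (p^N), aa z) atTop (nhds S) := by
    rw [NormedAddCommGroup.tendsto_atTop]
    intro ε hε
    obtain ⟨M, hM⟩ : ∃ M : ℕ, ∀ m ≥ M, bb m < ε/2 := by
      have h0 := hbbsum.tendsto_atTop_zero
      rw [NormedAddCommGroup.tendsto_atTop] at h0
      obtain ⟨M, hM⟩ := h0 (ε/2) (by linarith)
      exact ⟨M, fun m hm => by
        have := hM m hm
        rwa [sub_zero, Real.norm_of_nonneg (hbb0 m)] at this⟩
    have hhead : Tendsto (fun N => ∑ m ∈ Finset.range M,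
        (((p:K)^N)⁻¹ * ∑ z ∈ Finset.range (p^N), ffm m z - ss m)) atTop (nhds 0) := by
      rw [show (0:K) = ∑ m ∈ Finset.range M, (0:K) by simp]
      apply tendsto_finset_sum
      intro m _
      have hlim0 := (hfmlim m).sub (tendsto_const_nhds (x := ss m))
      have hssm : ss m = c m * B (m+2) := by rw [hss]
      rw [show (0:K) = c m * B (m+2) - ss m by rw [hssm, sub_self]]
      exact hlim0
    rw [NormedAddCommGroup.tendsto_atTop] at hhead
    obtain ⟨N₀, hN₀⟩ := hhead (ε/2) (by linarith)
    refine ⟨N₀, fun N hN => ?_⟩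
    have hdiff : HasSum (fun m => (((p:K)^N)⁻¹ * ∑ z ∈ Finset.range (p^N), ffm m z - ss m))
        ((((p:K)^N)⁻¹ * ∑ z ∈ Finset.range (p^N), gg z
          - ((p:K)^N)⁻¹ * ∑ z ∈ Finset.range (p^N), aa z) - S) := (hNsum N).sub hS
    have hsummable := hdiff.summable
    have hterm_bd : ∀ m : ℕ,
        ‖((p:K)^N)⁻¹ * ∑ z ∈ Finset.range (p^N), ffm m z - ss m‖ ≤ bb m := by
      intro m
      refine le_trans (hnormsub _ _) (max_le (hbound' m N) (hsnorm m))
    have hsplit := Summable.sum_add_tsum_nat_add M hsummable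
    have htail : ‖∑' i : ℕ, (((p:K)^N)⁻¹ * ∑ z ∈ Finset.range (p^N), ffm (i+M) z
        - ss (i+M))‖ ≤ ε/2 := by
      apply norm_tsum_le_of_forall_le_of_nonneg (by linarith)
      intro i
      exact le_trans (hterm_bd (i+M)) (hM (i+M) (by omega)).le
    have hfinal : (((p:K)^N)⁻¹ * ∑ z ∈ Finset.range (p^N), gg z
        - ((p:K)^N)⁻¹ * ∑ z ∈ Finset.range (p^N), aa z) - S
        = (∑ m ∈ Finset.range M,
            (((p:K)^N)⁻¹ * ∑ z ∈ Finset.range (p^N), ffm m z - ss m))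
          + ∑' i : ℕ, (((p:K)^N)⁻¹ * ∑ z ∈ Finset.range (p^N), ffm (i+M) z - ss (i+M)) := by
      rw [hsplit, hdiff.tsum_eq]
    rw [hfinal]
    refine lt_of_le_of_lt (IsUltrametricDist.norm_add_le_max _ _) ?_
    apply max_lt
    · have h' := hN₀ N hN
      rw [sub_zero] at h'
      linarith
    · linarith [htail]
  -- limit of the affine part
  have haalim : Tendsto (fun N => ((p:K)^N)⁻¹ * ∑ z ∈ Finset.range (p^N), aa z)
      atTop (nhds ((x * L x - x) * B 0 + L x * B 1)) := by
    have h0 := (hB' 0).const_mul (x * L x - x)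
    have h1 := (hB' 1).const_mul (L x)
    have hsum := h0.add h1
    have heq : (fun N => (x * L x - x) * (((p:K)^N)⁻¹ *
          ∑ z ∈ Finset.range (p^N), F z * (ι (z : ℤ_[p]))^0)
        + L x * (((p:K)^N)⁻¹ * ∑ z ∈ Finset.range (p^N), F z * (ι (z : ℤ_[p]))^1))
        = fun N => ((p:K)^N)⁻¹ * ∑ z ∈ Finset.range (p^N), aa z := by
      funext N
      rw [show ∑ z ∈ Finset.range (p^N), aa z
          = (x * L x - x) * (∑ z ∈ Finset.range (p^N), F z * (ι (z : ℤ_[p]))^0)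
            + L x * (∑ z ∈ Finset.range (p^N), F z * (ι (z : ℤ_[p]))^1) from by
        rw [Finset.mul_sum, Finset.mul_sum, ← Finset.sum_add_distrib]
        exact Finset.sum_congr rfl fun z _ => by simp only [haa]; ring]
      ring
    rw [← heq]
    exact hsum
  have hcomb := hG'.sub haalim
  have huniq : G - ((x * L x - x) * B 0 + L x * B 1) = S := tendsto_nhds_unique hcomb key
  refine ⟨S, ?_, ?_⟩
  · rw [show (fun m : ℕ => (-1 : K) ^ (m + 2) / (((m : K) + 1) * ((m : K) + 2)) * B (m + 2) *
        x ^ (-((m : ℤ) + 1))) = ss from by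
      funext m
      simp only [hss, hc]
      ring]
    exact hS
  · linear_combination huniq
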